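/- Let p₁, p₂, p₃ ∈ ℝ² be affinely independent, let T be the convex hull of {p₁, p₂, p₃}, and let v : ℝ² → ℝ be an affine map with vᵢ := v(pᵢ). Then ∫_T v(x)² dx ≥ (|T|/(6·(√2 + 2)))·(v₁² + v₂² + v₃²), where |T| denotes the two-dimensional Lebesgue measure of T and the integral is with respect to Lebesgue measure on ℝ². -/

import Mathlib

open MeasureTheory

section TriangleAux
open Set


-- inner antiderivative lemma
lemma inner_int (p c u : ℝ) (hu : 0 ≤ u) :
    ∫ y in Set.Icc (0:ℝ) u, (p + c*y)^2 = p^2*u + p*c*u^2 + c^2*u^3/3 := by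
  rw [MeasureTheory.integral_Icc_eq_integral_Ioc, ← intervalIntegral.integral_of_le hu]
  have hd : ∀ y ∈ Set.uIcc (0:ℝ) u,
      HasDerivAt (fun t => p^2*t + p*c*t^2 + c^2*t^3/3) ((p + c*y)^2) y := by
    intro y _
    have h1 : HasDerivAt (fun t : ℝ => p^2*t + p*c*t^2 + c^2*t^3/3)
        (p^2*1 + p*c*(2*y^1) + c^2*(3*y^2)/3) y := by
      exact (((hasDerivAt_id y).const_mul (p^2)).add
        (((hasDerivAt_pow 2 y).const_mul (p*c)))).add
        (((hasDerivAt_pow 3 y).const_mul (c^2)).div_const 3) |>.congr_deriv (by ring)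
    convert h1 using 1
    ring
  rw [intervalIntegral.integral_eq_sub_of_hasDerivAt hd ((by fun_prop : Continuous fun y:ℝ => (p + c*y)^2).intervalIntegrable 0 u)]
  ring

lemma outer_int (a b c : ℝ) :
    ∫ x in Set.Icc (0:ℝ) 1,
        ((a+b*x)^2*(1-x) + (a+b*x)*c*(1-x)^2 + c^2*(1-x)^3/3)
      = a^2/2 + a*b/3 + a*c/3 + b^2/12 + c^2/12 + b*c/12 := by
  rw [MeasureTheory.integral_Icc_eq_integral_Ioc,
    ← intervalIntegral.integral_of_le (by norm_num : (0:ℝ) ≤ 1)]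
  set c1 : ℝ := a^2 + a*c + c^2/3 with hc1
  set c2 : ℝ := -(a^2)/2 + a*b - a*c + b*c/2 - c^2/2 with hc2
  set c3 : ℝ := -(2*a*b)/3 + a*c/3 + b^2/3 - 2*b*c/3 + c^2/3 with hc3
  set c4 : ℝ := -(b^2)/4 + b*c/4 - c^2/12 with hc4
  have hd : ∀ x ∈ Set.uIcc (0:ℝ) 1,
      HasDerivAt (fun t => c1*t + c2*t^2 + c3*t^3 + c4*t^4)
        ((a+b*x)^2*(1-x) + (a+b*x)*c*(1-x)^2 + c^2*(1-x)^3/3) x := by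
    intro x _
    have h1 : HasDerivAt (fun t : ℝ => c1*t + c2*t^2 + c3*t^3 + c4*t^4)
        (c1*1 + c2*(2*x^1) + c3*(3*x^2) + c4*(4*x^3)) x := by
      exact (((hasDerivAt_id x).const_mul c1).add
        ((hasDerivAt_pow 2 x).const_mul c2)).add
        ((hasDerivAt_pow 3 x).const_mul c3) |>.add
        ((hasDerivAt_pow 4 x).const_mul c4)
    convert h1 using 1
    rw [hc1, hc2, hc3, hc4]; ring
  rw [intervalIntegral.integral_eq_sub_of_hasDerivAt hd
    ((by fun_prop : Continuous fun x:ℝ =>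
      (a+b*x)^2*(1-x) + (a+b*x)*c*(1-x)^2 + c^2*(1-x)^3/3).intervalIntegrable 0 1)]
  rw [hc1, hc2, hc3, hc4]; ring

def Tri : Set (ℝ × ℝ) := {p | 0 ≤ p.1 ∧ 0 ≤ p.2 ∧ p.1 + p.2 ≤ 1}

lemma isClosed_Tri : IsClosed Tri := by
  have : Tri = {p : ℝ×ℝ | 0 ≤ p.1} ∩ ({p : ℝ×ℝ | 0 ≤ p.2} ∩ {p : ℝ×ℝ | p.1 + p.2 ≤ 1}) := rfl
  rw [this]
  exact (isClosed_le continuous_const continuous_fst).inter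
    ((isClosed_le continuous_const continuous_snd).inter
      (isClosed_le (continuous_fst.add continuous_snd) continuous_const))

lemma isCompact_Tri : IsCompact Tri := by
  refine IsCompact.of_isClosed_subset (isCompact_Icc (a := ((0:ℝ),(0:ℝ))) (b := (1,1)))
    isClosed_Tri ?_
  rintro ⟨x, y⟩ ⟨h1, h2, h3⟩
  exact ⟨⟨h1, h2⟩, ⟨by dsimp at *; linarith, by dsimp at *; linarith⟩⟩

lemma measurableSet_Tri : MeasurableSet Tri := isClosed_Tri.measurableSet

lemma tri_integral (a b c : ℝ) :
    ∫ z in Tri, (a + b*z.1 + c*z.2)^2 =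
      a^2/2 + a*b/3 + a*c/3 + b^2/12 + c^2/12 + b*c/12 := by
  have hcont : Continuous fun z : ℝ×ℝ => (a + b*z.1 + c*z.2)^2 := by fun_prop
  have hint : IntegrableOn (fun z : ℝ×ℝ => (a + b*z.1 + c*z.2)^2) Tri volume :=
    hcont.continuousOn.integrableOn_compact isCompact_Tri
  rw [← MeasureTheory.integral_indicator measurableSet_Tri]
  have hint2 : Integrable (Tri.indicator fun z : ℝ×ℝ => (a + b*z.1 + c*z.2)^2)
      (volume.prod volume) := by
    rw [← Measure.volume_eq_prod]
    exact (integrable_indicator_iff measurableSet_Tri).2 hint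
  rw [Measure.volume_eq_prod, MeasureTheory.integral_prod _ hint2]
  have hstep : ∀ x : ℝ,
      (∫ y, Tri.indicator (fun z : ℝ×ℝ => (a + b*z.1 + c*z.2)^2) (x, y))
      = (Set.Icc (0:ℝ) 1).indicator
          (fun x => ∫ y in Set.Icc (0:ℝ) (1-x), ((a + b*x) + c*y)^2) x := by
    intro x
    by_cases hx : 0 ≤ x
    · have heq : (fun y => Tri.indicator (fun z : ℝ×ℝ => (a + b*z.1 + c*z.2)^2) (x, y))
          = (Set.Icc (0:ℝ) (1-x)).indicator (fun y => ((a + b*x) + c*y)^2) := by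
        funext y
        by_cases hy : y ∈ Set.Icc (0:ℝ) (1-x)
        · rw [Set.indicator_of_mem hy]
          have hmem : (x, y) ∈ Tri := ⟨hx, hy.1, by have := hy.2; dsimp; linarith⟩
          rw [Set.indicator_of_mem hmem]
        · rw [Set.indicator_of_notMem hy]
          have hmem : (x, y) ∉ Tri := by
            intro hm
            exact hy ⟨hm.2.1, by have := hm.2.2; dsimp at this ⊢; linarith⟩
          rw [Set.indicator_of_notMem hmem]
      rw [heq, MeasureTheory.integral_indicator measurableSet_Icc]
      by_cases hx1 : x ≤ 1
      · rw [Set.indicator_of_mem (Set.mem_Icc.2 ⟨hx, hx1⟩)]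
      · rw [Set.indicator_of_notMem (by simp [Set.mem_Icc, hx1])]
        rw [Set.Icc_eq_empty (by intro hc; linarith)]
        simp
    · have heq : (fun y => Tri.indicator (fun z : ℝ×ℝ => (a + b*z.1 + c*z.2)^2) (x, y))
          = fun _ => (0:ℝ) := by
        funext y
        exact Set.indicator_of_notMem (fun hm => hx hm.1) _
      rw [heq, Set.indicator_of_notMem (by simp [Set.mem_Icc]; intro h; exact absurd h hx)]
      simp
  simp_rw [hstep]
  rw [MeasureTheory.integral_indicator measurableSet_Icc]
  rw [MeasureTheory.setIntegral_congr_fun measurableSet_Icc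
    (fun x hx => inner_int (a + b*x) c (1-x) (by have := (Set.mem_Icc.1 hx).2; linarith))]
  exact outer_int a b c

lemma tri_volume : (volume Tri).toReal = 1/2 := by
  have h := tri_integral 1 0 0
  have h2 : ∫ z in Tri, ((1:ℝ) + 0*z.1 + 0*z.2)^2 = ∫ z in Tri, (1:ℝ) := by
    apply MeasureTheory.setIntegral_congr_fun measurableSet_Tri
    intro z _; ring
  rw [h2] at h
  rw [MeasureTheory.setIntegral_const] at h
  rw [← measureReal_def]
  simpa using h

lemma tri_hull : convexHull ℝ ({((0:ℝ),(0:ℝ)), (1,0), (0,1)} : Set (ℝ×ℝ)) = Tri := by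
  apply subset_antisymm
  · apply convexHull_min
    · rintro z hz
      simp only [Set.mem_insert_iff, Set.mem_singleton_iff] at hz
      rcases hz with rfl | rfl | rfl <;> exact ⟨by norm_num, by norm_num, by norm_num⟩
    · rintro x ⟨hx1, hx2, hx3⟩ y ⟨hy1, hy2, hy3⟩ a b ha hb hab
      refine ⟨?_, ?_, ?_⟩ <;>
        simp only [Prod.fst_add, Prod.snd_add, Prod.smul_fst, Prod.smul_snd,
          smul_eq_mul] <;> nlinarith
  · rintro ⟨x, y⟩ ⟨h1, h2, h3⟩
    have := Finset.centerMass_mem_convexHull (Finset.univ : Finset (Fin 3))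
      (w := ![1 - x - y, x, y]) (z := ![((0:ℝ),(0:ℝ)), (1,0), (0,1)])
      (s := {((0:ℝ),(0:ℝ)), (1,0), (0,1)})
      (by intro i _; fin_cases i <;> simp <;> linarith)
      (by simp [Fin.sum_univ_three]; linarith)
      (by intro i _; fin_cases i <;> simp)
    convert this using 1
    simp [Finset.centerMass, Fin.sum_univ_three]
    have : (1 - x - y + x + y : ℝ) = 1 := by ring
    rw [this]
    norm_num

end TriangleAux

set_option maxHeartbeats 2000000 in
theorem integral_sq_affine_over_triangle_lower
    (p₁ p₂ p₃ : EuclideanSpace ℝ (Fin 2))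
    (h : AffineIndependent ℝ ![p₁, p₂, p₃])
    (v : EuclideanSpace ℝ (Fin 2) →ᵃ[ℝ] ℝ) :
    (volume (convexHull ℝ ({p₁, p₂, p₃} : Set (EuclideanSpace ℝ (Fin 2))))).toReal /
        (6 * (Real.sqrt 2 + 2)) *
        (v p₁ ^ 2 + v p₂ ^ 2 + v p₃ ^ 2) ≤
      ∫ x in convexHull ℝ ({p₁, p₂, p₃} : Set (EuclideanSpace ℝ (Fin 2))), (v x) ^ 2 := by
  classical
  set u : EuclideanSpace ℝ (Fin 2) := p₂ - p₁ with hu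
  set w : EuclideanSpace ℝ (Fin 2) := p₃ - p₁ with hw
  -- the linear map sending e₀ ↦ u, e₁ ↦ w
  set lE : EuclideanSpace ℝ (Fin 2) →ₗ[ℝ] EuclideanSpace ℝ (Fin 2) :=
    ((PiLp.projₗ 2 (fun _ : Fin 2 => ℝ) (0 : Fin 2)).smulRight u)
    + ((PiLp.projₗ 2 (fun _ : Fin 2 => ℝ) (1 : Fin 2)).smulRight w) with hlEdef
  have hlE : ∀ x : EuclideanSpace ℝ (Fin 2), lE x = x 0 • u + x 1 • w := fun x => rfl
  -- injectivity
  have hker : ∀ z : EuclideanSpace ℝ (Fin 2), lE z = 0 → z = 0 := by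
    intro z hz
    have hsum : ∑ e ∈ Finset.univ, (![-(z 0 + z 1), z 0, z 1] : Fin 3 → ℝ) e = 0 := by
      simp [Fin.sum_univ_three]
    have hcomb : ∑ e ∈ Finset.univ,
        (![-(z 0 + z 1), z 0, z 1] : Fin 3 → ℝ) e • (![p₁, p₂, p₃] : Fin 3 → _) e = 0 := by
      rw [hlE] at hz
      simp only [Fin.sum_univ_three, Matrix.cons_val_zero, Matrix.cons_val_one,
        Matrix.head_cons, Matrix.cons_val_two, Matrix.tail_cons]
      rw [hu, hw] at hz
      have : z 0 • (p₂ - p₁) + z 1 • (p₃ - p₁) = 0 := hz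
      rw [smul_sub, smul_sub] at this
      rw [neg_smul, add_smul]
      linear_combination (norm := module) this
    have h0 := affineIndependent_iff.1 h Finset.univ _ hsum hcomb
    have hz0 : z 0 = 0 := by simpa using h0 1 (Finset.mem_univ _)
    have hz1 : z 1 = 0 := by simpa using h0 2 (Finset.mem_univ _)
    ext i
    fin_cases i
    · exact hz0
    · exact hz1
  have hinj : Function.Injective lE := by
    intro x y hxy
    have : lE (x - y) = 0 := by rw [map_sub, hxy, sub_self]
    have := hker _ this
    exact sub_eq_zero.1 this
  set lE' : EuclideanSpace ℝ (Fin 2) →L[ℝ] EuclideanSpace ℝ (Fin 2) :=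
    LinearMap.toContinuousLinearMap lE with hlE'
  set f : EuclideanSpace ℝ (Fin 2) → EuclideanSpace ℝ (Fin 2) := fun x => lE x + p₁ with hf
  -- the measurable equivalence ℝ×ℝ ≃ E
  set ψ : (ℝ × ℝ) ≃ᵐ EuclideanSpace ℝ (Fin 2) :=
    ((MeasurableEquiv.piFinTwo (fun _ : Fin 2 => ℝ)).symm).trans
      (MeasurableEquiv.toLp 2 (Fin 2 → ℝ)) with hψdef
  have hψ : MeasurePreserving ψ volume volume :=
    ((EuclideanSpace.volume_preserving_symm_measurableEquiv_toLp (Fin 2)).symm).comp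
      ((volume_preserving_piFinTwo (fun _ : Fin 2 => ℝ)).symm)
  have hψ0 : ∀ z : ℝ × ℝ, (ψ z) 0 = z.1 := fun z => rfl
  have hψ1 : ∀ z : ℝ × ℝ, (ψ z) 1 = z.2 := fun z => rfl
  set S : Set (EuclideanSpace ℝ (Fin 2)) := ψ '' Tri with hS
  have hSpre : S = ψ.symm ⁻¹' Tri := by
    rw [hS, MeasurableEquiv.image_eq_preimage_symm]
  have hSmeas : MeasurableSet S := by
    rw [hSpre]; exact ψ.symm.measurable measurableSet_Tri
  have hvolS : volume S = volume Tri := by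
    rw [hSpre]
    exact (MeasurePreserving.symm ψ hψ).measure_preimage measurableSet_Tri.nullMeasurableSet
  have hfψ : ∀ z : ℝ × ℝ, f (ψ z) = z.1 • u + z.2 • w + p₁ := by
    intro z
    rw [hf]
    simp only [hlE, hψ0, hψ1]
  -- T = f '' S
  set lF : (ℝ × ℝ) →ₗ[ℝ] EuclideanSpace ℝ (Fin 2) :=
    ((LinearMap.fst ℝ ℝ ℝ).smulRight u) + ((LinearMap.snd ℝ ℝ ℝ).smulRight w) with hlF
  set F : (ℝ × ℝ) →ᵃ[ℝ] EuclideanSpace ℝ (Fin 2) :=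
    lF.toAffineMap + AffineMap.const ℝ (ℝ × ℝ) p₁ with hFdef
  have hFz : ∀ z : ℝ × ℝ, F z = z.1 • u + z.2 • w + p₁ := fun z => rfl
  have hT : f '' S = convexHull ℝ ({p₁, p₂, p₃} : Set (EuclideanSpace ℝ (Fin 2))) := by
    rw [hS, Set.image_image]
    have : (fun z : ℝ × ℝ => f (ψ z)) = F := by
      funext z; rw [hfψ z, hFz z]
    rw [this, ← tri_hull, AffineMap.image_convexHull]
    congr 1
    rw [Set.image_insert_eq, Set.image_insert_eq, Set.image_singleton]
    have h1 : F ((0:ℝ), (0:ℝ)) = p₁ := by rw [hFz]; simp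
    have h2 : F ((1:ℝ), (0:ℝ)) = p₂ := by rw [hFz]; simp [hu]
    have h3 : F ((0:ℝ), (1:ℝ)) = p₃ := by rw [hFz]; simp [hw]
    rw [h1, h2, h3]
  have hinjOn : Set.InjOn f S := by
    intro x _ y _ hxy
    apply hinj
    have : lE x + p₁ = lE y + p₁ := hxy
    exact add_right_cancel this
  have hderiv : ∀ x ∈ S, HasFDerivWithinAt f lE' S x := by
    intro x _
    exact ((lE'.hasFDerivAt).add_const p₁).hasFDerivWithinAt
  -- change of variables
  have hCoV : ∀ g : EuclideanSpace ℝ (Fin 2) → ℝ,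
      ∫ x in f '' S, g x = ∫ x in S, |lE'.det| • g (f x) :=
    fun g => integral_image_eq_integral_abs_det_fderiv_smul volume hSmeas
      (fun x hx => hderiv x hx) hinjOn g
  set d : ℝ := |lE'.det| with hd
  have hd0 : 0 ≤ d := abs_nonneg _
  set va : ℝ := v p₁ with hva
  set vb : ℝ := v p₂ - v p₁ with hvb
  set vc : ℝ := v p₃ - v p₁ with hvc
  have hvf : ∀ z : ℝ × ℝ, v (f (ψ z)) = va + vb * z.1 + vc * z.2 := by
    intro z
    rw [hfψ z]
    have : z.1 • u + z.2 • w + p₁ = (z.1 • u + z.2 • w) +ᵥ p₁ := rfl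
    rw [this, AffineMap.map_vadd]
    have hlin : v.linear (z.1 • u + z.2 • w) = z.1 * (v p₂ - v p₁) + z.2 * (v p₃ - v p₁) := by
      rw [map_add, LinearMap.map_smul, LinearMap.map_smul, hu, hw]
      have h1 : v.linear (p₂ - p₁) = v p₂ - v p₁ := by
        rw [← vsub_eq_sub, AffineMap.linearMap_vsub, vsub_eq_sub]
      have h2 : v.linear (p₃ - p₁) = v p₃ - v p₁ := by
        rw [← vsub_eq_sub, AffineMap.linearMap_vsub, vsub_eq_sub]
      rw [h1, h2]; simp [smul_eq_mul]
    rw [hlin]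
    simp only [vadd_eq_add, hva, hvb, hvc]
    ring
  -- integral over T
  have hIT : ∫ x in convexHull ℝ ({p₁, p₂, p₃} : Set (EuclideanSpace ℝ (Fin 2))), (v x)^2
      = d * ∫ z in Tri, (va + vb * z.1 + vc * z.2)^2 := by
    rw [← hT, hCoV (fun x => (v x)^2), MeasureTheory.integral_smul, smul_eq_mul]
    congr 1
    rw [hS, hψ.setIntegral_image_emb ψ.measurableEmbedding _ _]
    apply MeasureTheory.setIntegral_congr_fun measurableSet_Tri
    intro z _
    dsimp only
    rw [hvf z]
  -- volume of T
  have hvolT : (volume (convexHull ℝ ({p₁, p₂, p₃} : Set (EuclideanSpace ℝ (Fin 2))))).toReal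
      = d * (1/2) := by
    have h1 : ∫ x in f '' S, (1:ℝ) = d * ∫ x in S, (1:ℝ) := by
      rw [hCoV (fun _ => (1:ℝ)), MeasureTheory.integral_smul, smul_eq_mul]
    rw [MeasureTheory.setIntegral_const, MeasureTheory.setIntegral_const] at h1
    rw [measureReal_def, measureReal_def] at h1
    rw [← hT]
    have := h1
    simp only [smul_eq_mul, mul_one] at this
    rw [this, hvolS, tri_volume]
  rw [hIT, hvolT, tri_integral]
  -- final arithmetic
  have hs0 : (0:ℝ) ≤ Real.sqrt 2 := Real.sqrt_nonneg 2
  have hden : (0:ℝ) < 6 * (Real.sqrt 2 + 2) := by nlinarith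
  have hv2 : v p₂ = va + vb := by rw [hva, hvb]; ring
  have hv3 : v p₃ = va + vc := by rw [hva, hvc]; ring
  rw [hv2, hv3]
  clear_value va vb vc d
  have hSig : (0:ℝ) ≤ va^2 + (va+vb)^2 + (va+vc)^2 := by positivity
  have hJ : (va^2 + (va+vb)^2 + (va+vc)^2)/24
      ≤ va^2/2 + va*vb/3 + va*vc/3 + vb^2/12 + vc^2/12 + vb*vc/12 := by
    nlinarith [sq_nonneg (3*va + vb + vc)]
  have h1 : d*(1/2)/(6*(Real.sqrt 2 + 2)) ≤ d/24 := by
    rw [div_le_div_iff₀ hden (by norm_num : (0:ℝ) < 24)]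
    nlinarith
  calc d*(1/2)/(6*(Real.sqrt 2 + 2)) * (va^2 + (va+vb)^2 + (va+vc)^2)
      ≤ d/24 * (va^2 + (va+vb)^2 + (va+vc)^2) := mul_le_mul_of_nonneg_right h1 hSig
    _ ≤ d * (va^2/2 + va*vb/3 + va*vc/3 + vb^2/12 + vc^2/12 + vb*vc/12) := by
        nlinarith [mul_le_mul_of_nonneg_left hJ hd0]
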